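/- arXiv:1503.07370 — 3 statements merged into one kernel-verified Lean document; each statement's English description precedes it below -/
import Mathlib

section
/- Let G be a group generated by a normal commutator-closed set X of elements of finite order dividing m, and suppose G is generated by finitely many elements x₁,…,x_d ∈ X. Let N be a normal subgroup of G of finite index such that X ∩ N = {1}. Then the subgroup L generated by the subgroups [N, x_i] (i = 1,…,d) is nilpotent of class at most d and has finite exponent dividing m^d. -/
private lemma closure_comm' {G : Type*} [Group G] {T : Set G}
    (hT : ∀ a ∈ T, ∀ b ∈ T, a * b = b * a) :
    ∀ a ∈ Subgroup.closure T, ∀ b ∈ Subgroup.closure T, a * b = b * a := by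
  have h1 : Subgroup.closure T ≤ Subgroup.centralizer T :=
    (Subgroup.closure_le _).2 fun a ha =>
      Subgroup.mem_centralizer_iff.2 fun b hb => hT b hb a ha
  intro a ha b hb
  have h2 : Subgroup.closure T ≤ Subgroup.centralizer {b} := by
    refine (Subgroup.closure_le _).2 fun t ht => Subgroup.mem_centralizer_iff.2 ?_
    intro c hc
    rw [Set.mem_singleton_iff] at hc; subst hc
    exact (Subgroup.mem_centralizer_iff.1 (h1 hb) t ht).symm
  exact (Subgroup.mem_centralizer_iff.1 (h2 ha) b rfl).symm

private lemma closure_pow' {G : Type*} [Group G] {T : Set G} {m : ℕ}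
    (hT : ∀ a ∈ T, ∀ b ∈ T, a * b = b * a) (hm : ∀ a ∈ T, a ^ m = 1) :
    ∀ a ∈ Subgroup.closure T, a ^ m = 1 := by
  intro a ha
  refine Subgroup.closure_induction (fun t ht => hm t ht) (one_pow m) ?_ ?_ ha
  · intro u v hu hv pu pv
    have hc : Commute u v := closure_comm' hT u hu v hv
    rw [hc.mul_pow, pu, pv, one_mul]
  · intro u hu pu
    rw [inv_pow, pu, inv_one]

private lemma conj_iSup' {G : Type*} [Group G] {ι : Sort*} (H : ι → Subgroup G) (g : G)
    (h : ∀ i, ∀ a ∈ H i, g * a * g⁻¹ ∈ H i) :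
    ∀ a ∈ ⨆ i, H i, g * a * g⁻¹ ∈ ⨆ i, H i := by
  intro a ha
  refine Subgroup.iSup_induction H (C := fun a => g * a * g⁻¹ ∈ ⨆ i, H i) ha
    (fun i b hb => le_iSup H i (h i b hb)) ?_ ?_
  · simpa using one_mem (⨆ i, H i)
  · intro u v hu hv
    have e : g * (u * v) * g⁻¹ = (g * u * g⁻¹) * (g * v * g⁻¹) := by group
    rw [e]; exact mul_mem hu hv

/-- Lemma on the subgroup L generated by the [N, xᵢ]: it is nilpotent of class at most d
and of exponent dividing m^d. -/
theorem stmt_4 {G : Type*} [Group G] (m d : ℕ) (hm : 0 < m) (X : Set G)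
    (hconj : ∀ x ∈ X, ∀ g : G, g⁻¹ * x * g ∈ X)
    (hcomm : ∀ x ∈ X, ∀ y ∈ X, x⁻¹ * y⁻¹ * x * y ∈ X)
    (hord : ∀ x ∈ X, x ^ m = 1)
    (hGX : Subgroup.closure X = ⊤)
    (x : Fin d → G) (hx : ∀ i, x i ∈ X)
    (hgen : Subgroup.closure (Set.range x) = ⊤)
    (N : Subgroup G) [N.Normal] [N.FiniteIndex]
    (hXN : X ∩ ↑N = {1}) :
    (⊤ : Subgroup
        ↥(Subgroup.closure {z : G | ∃ i : Fin d, ∃ n ∈ N, z = n⁻¹ * (x i)⁻¹ * n * x i})).lowerCentralSeries d = ⊥ ∧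
      ∀ g ∈ Subgroup.closure {z : G | ∃ i : Fin d, ∃ n ∈ N, z = n⁻¹ * (x i)⁻¹ * n * x i},
        g ^ m ^ d = 1 := by
  classical
  set L : Subgroup G :=
    Subgroup.closure {z : G | ∃ i : Fin d, ∃ n ∈ N, z = n⁻¹ * (x i)⁻¹ * n * x i} with hLdef
  set A : Fin d → Subgroup G :=
    fun i => Subgroup.closure {z : G | ∃ n ∈ N, z = n⁻¹ * (x i)⁻¹ * n * x i} with hAdef
  have hNnorm : N.Normal := inferInstance
  -- conjugates of x i by N are in X
  have hax : ∀ (i : Fin d) (n : G), n ∈ N → n⁻¹ * x i * n ∈ X :=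
    fun i n _ => hconj (x i) (hx i) n
  -- generators of A i are in N
  have hmemN : ∀ (i : Fin d) (n : G), n ∈ N → n⁻¹ * (x i)⁻¹ * n * x i ∈ N := by
    intro i n hn
    have e : n⁻¹ * (x i)⁻¹ * n * x i = n⁻¹ * ((x i)⁻¹ * n * ((x i)⁻¹)⁻¹) := by group
    rw [e]
    exact mul_mem (inv_mem hn) (hNnorm.conj_mem n hn (x i)⁻¹)
  -- key: two elements of X whose commutator lies in N commute
  have keycomm : ∀ u ∈ X, ∀ v ∈ X, u⁻¹ * v⁻¹ * u * v ∈ N → u * v = v * u := by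
    intro u hu v hv hN2
    have hmem : u⁻¹ * v⁻¹ * u * v ∈ X ∩ (N : Set G) := ⟨hcomm u hu v hv, hN2⟩
    rw [hXN, Set.mem_singleton_iff] at hmem
    calc u * v = (v * u) * (u⁻¹ * v⁻¹ * u * v) := by group
    _ = v * u := by rw [hmem, mul_one]
  -- conjugates of x i by N pairwise commute
  have commT : ∀ (i : Fin d) (p q : G), p ∈ N → q ∈ N →
      (p⁻¹ * x i * p) * (q⁻¹ * x i * q) = (q⁻¹ * x i * q) * (p⁻¹ * x i * p) := by
    intro i p q hp hq
    refine keycomm _ (hax i p hp) _ (hax i q hq) ?_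
    rw [← QuotientGroup.eq_one_iff]
    have hp1 : ((p : G) : G ⧸ N) = 1 := (QuotientGroup.eq_one_iff p).2 hp
    have hq1 : ((q : G) : G ⧸ N) = 1 := (QuotientGroup.eq_one_iff q).2 hq
    simp only [QuotientGroup.mk_mul, QuotientGroup.mk_inv, hp1, hq1, one_mul, mul_one, inv_one]
    group
  -- A i is inside the closure of the commuting set of conjugates
  have hAB : ∀ i : Fin d, A i ≤ Subgroup.closure {z : G | ∃ n ∈ N, z = n⁻¹ * x i * n} := by
    intro i
    refine (Subgroup.closure_le _).2 fun z hz => ?_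
    obtain ⟨n, hn, rfl⟩ := hz
    have h1 : (n⁻¹ * x i * n) ∈ Subgroup.closure {z : G | ∃ n ∈ N, z = n⁻¹ * x i * n} :=
      Subgroup.subset_closure ⟨n, hn, rfl⟩
    have h2 : x i ∈ Subgroup.closure {z : G | ∃ n ∈ N, z = n⁻¹ * x i * n} :=
      Subgroup.subset_closure ⟨1, one_mem N, by group⟩
    have e : n⁻¹ * (x i)⁻¹ * n * x i = (n⁻¹ * x i * n)⁻¹ * x i := by group
    rw [e]
    exact mul_mem (inv_mem h1) h2
  have hTcomm : ∀ i : Fin d, ∀ a ∈ {z : G | ∃ n ∈ N, z = n⁻¹ * x i * n},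
      ∀ b ∈ {z : G | ∃ n ∈ N, z = n⁻¹ * x i * n}, a * b = b * a := by
    rintro i a ⟨p, hp, rfl⟩ b ⟨q, hq, rfl⟩
    exact commT i p q hp hq
  have hTpow : ∀ i : Fin d, ∀ a ∈ {z : G | ∃ n ∈ N, z = n⁻¹ * x i * n}, a ^ m = 1 := by
    rintro i a ⟨p, hp, rfl⟩
    exact hord _ (hax i p hp)
  -- A i is "abelian" and of exponent dividing m
  have Acomm : ∀ i : Fin d, ∀ a ∈ A i, ∀ b ∈ A i, a * b = b * a :=
    fun i a ha b hb => closure_comm' (hTcomm i) a (hAB i ha) b (hAB i hb)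
  have Apow : ∀ i : Fin d, ∀ a ∈ A i, a ^ m = 1 :=
    fun i a ha => closure_pow' (hTcomm i) (hTpow i) a (hAB i ha)
  have AleN : ∀ i : Fin d, A i ≤ N := by
    intro i
    refine (Subgroup.closure_le _).2 fun z hz => ?_
    obtain ⟨n, hn, rfl⟩ := hz
    exact hmemN i n hn
  -- A i is normalized by N
  have Aconj' : ∀ (i : Fin d) (g : G), g ∈ N → ∀ a ∈ A i, g⁻¹ * a * g ∈ A i := by
    intro i g hg a ha
    refine Subgroup.closure_induction (k := {z : G | ∃ n ∈ N, z = n⁻¹ * (x i)⁻¹ * n * x i})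
      (p := fun a _ => g⁻¹ * a * g ∈ A i) ?_ ?_ ?_ ?_ ha
    · rintro z ⟨n, hn, rfl⟩
      have h1 : ((n * g)⁻¹ * (x i)⁻¹ * (n * g) * x i) ∈ A i :=
        Subgroup.subset_closure ⟨n * g, mul_mem hn hg, rfl⟩
      have h2 : (g⁻¹ * (x i)⁻¹ * g * x i) ∈ A i :=
        Subgroup.subset_closure ⟨g, hg, rfl⟩
      have e : g⁻¹ * (n⁻¹ * (x i)⁻¹ * n * x i) * g =
          ((n * g)⁻¹ * (x i)⁻¹ * (n * g) * x i) * (g⁻¹ * (x i)⁻¹ * g * x i)⁻¹ := by group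
      rw [e]
      exact mul_mem h1 (inv_mem h2)
    · simpa using one_mem (A i)
    · intro u v _ _ pu pv
      have e : g⁻¹ * (u * v) * g = (g⁻¹ * u * g) * (g⁻¹ * v * g) := by group
      rw [e]; exact mul_mem pu pv
    · intro u _ pu
      have e : g⁻¹ * u⁻¹ * g = (g⁻¹ * u * g)⁻¹ := by group
      rw [e]; exact inv_mem pu
  have Aconj : ∀ (i : Fin d) (g : G), g ∈ N → ∀ a ∈ A i, g * a * g⁻¹ ∈ A i := by
    intro i g hg a ha
    have := Aconj' i g⁻¹ (inv_mem hg) a ha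
    rwa [inv_inv] at this
  -- L is the sup of the A i
  have hLsup : L = ⨆ i, A i := by
    rw [hLdef, hAdef, ← Subgroup.closure_iUnion]
    congr 1
    ext z
    simp [Set.mem_iUnion]
  have AleL : ∀ i : Fin d, A i ≤ L := by
    intro i; rw [hLsup]; exact le_iSup A i
  have LleN : L ≤ N := by
    rw [hLsup]; exact iSup_le AleN
  have Lconj : ∀ g : G, g ∈ N → ∀ a ∈ L, g * a * g⁻¹ ∈ L := by
    intro g hg a ha
    rw [hLsup] at ha ⊢
    exact conj_iSup' A g (fun i => Aconj i g hg) a ha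
  -- the intersections N_T
  set NT : Finset (Fin d) → Subgroup G := fun T => ⨅ i ∈ T, A i with hNTdef
  have NT_le : ∀ (T : Finset (Fin d)) (i : Fin d), i ∈ T → NT T ≤ A i := by
    intro T i hi
    exact le_trans (iInf_le _ i) (iInf_le _ hi)
  have NT_mem : ∀ (T : Finset (Fin d)) (a : G), (∀ i ∈ T, a ∈ A i) → a ∈ NT T := by
    intro T a h
    exact Subgroup.mem_iInf.2 fun i => Subgroup.mem_iInf.2 fun hi => h i hi
  have NT_conj : ∀ (T : Finset (Fin d)) (g : G), g ∈ N → ∀ a ∈ NT T, g * a * g⁻¹ ∈ NT T := by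
    intro T g hg a ha
    refine NT_mem T _ fun i hi => Aconj i g hg a (NT_le T i hi ha)
  -- the C k
  set C : ℕ → Subgroup G :=
    fun k => ⨆ T : {T : Finset (Fin d) // T.card = k + 1}, NT T.1 with hCdef
  have CleN : ∀ k, C k ≤ N := by
    intro k
    refine iSup_le fun T => ?_
    obtain ⟨i₀, hi₀⟩ := Finset.card_pos.1 (by rw [T.2]; omega)
    exact le_trans (NT_le T.1 i₀ hi₀) (AleN i₀)
  have Cconj : ∀ (k : ℕ) (g : G), g ∈ N → ∀ a ∈ C k, g * a * g⁻¹ ∈ C k := by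
    intro k g hg
    exact conj_iSup' _ g (fun T => NT_conj T.1 g hg)
  -- main commutator step
  have commCL : ∀ k : ℕ, ⁅C k, L⁆ ≤ C (k + 1) := by
    intro k
    rw [Subgroup.commutator_le]
    intro g₁ hg₁ g₂ hg₂
    rw [commutatorElement_def]
    have main : g₁ ∈ C k ∧ ∀ g₂ ∈ L, g₁ * g₂ * g₁⁻¹ * g₂⁻¹ ∈ C (k + 1) := by
      refine Subgroup.iSup_induction _
        (C := fun g => g ∈ C k ∧ ∀ g₂ ∈ L, g * g₂ * g⁻¹ * g₂⁻¹ ∈ C (k + 1)) hg₁ ?_ ?_ ?_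
      · rintro ⟨T, hT⟩ g hg
        have hgCk : g ∈ C k := le_iSup (fun T : {T : Finset (Fin d) // T.card = k + 1} => NT T.1)
          ⟨T, hT⟩ hg
        obtain ⟨i₀, hi₀⟩ := Finset.card_pos.1 (show 0 < T.card by rw [hT]; omega)
        have hgN : g ∈ N := AleN i₀ (NT_le T i₀ hi₀ hg)
        refine ⟨hgCk, ?_⟩
        intro b hb
        rw [hLsup] at hb
        have inner : b ∈ N ∧ g * b * g⁻¹ * b⁻¹ ∈ C (k + 1) := by
          refine Subgroup.iSup_induction _
            (C := fun b => b ∈ N ∧ g * b * g⁻¹ * b⁻¹ ∈ C (k + 1)) hb ?_ ?_ ?_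
          · intro i b hbi
            refine ⟨AleN i hbi, ?_⟩
            by_cases hiT : i ∈ T
            · have hgAi : g ∈ A i := NT_le T i hiT hg
              have e : g * b * g⁻¹ * b⁻¹ = (1 : G) := by
                rw [Acomm i g hgAi b hbi]; group
              rw [e]; exact one_mem _
            · have hmemNT : g * b * g⁻¹ * b⁻¹ ∈ NT (insert i T) := by
                refine NT_mem _ _ fun j hj => ?_
                rcases Finset.mem_insert.1 hj with rfl | hjT
                · have e : g * b * g⁻¹ * b⁻¹ = (g * b * g⁻¹) * b⁻¹ := by group
                  rw [e]
                  exact mul_mem (Aconj j g hgN b hbi) (inv_mem hbi)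
                · have hgAj : g ∈ A j := NT_le T j hjT hg
                  have e : g * b * g⁻¹ * b⁻¹ = g * (b * g⁻¹ * b⁻¹) := by group
                  rw [e]
                  exact mul_mem hgAj (Aconj j b (AleN i hbi) g⁻¹ (inv_mem hgAj))
              have hcard : (insert i T).card = (k + 1) + 1 := by
                rw [Finset.card_insert_of_notMem hiT, hT]
              exact le_iSup (fun T : {T : Finset (Fin d) // T.card = (k + 1) + 1} => NT T.1)
                ⟨insert i T, hcard⟩ hmemNT
          · refine ⟨one_mem N, ?_⟩
            have e : g * 1 * g⁻¹ * 1⁻¹ = (1 : G) := by group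
            rw [e]; exact one_mem _
          · rintro u v ⟨huN, hu⟩ ⟨hvN, hv⟩
            refine ⟨mul_mem huN hvN, ?_⟩
            have e : g * (u * v) * g⁻¹ * (u * v)⁻¹ =
                (g * u * g⁻¹ * u⁻¹) * (u * (g * v * g⁻¹ * v⁻¹) * u⁻¹) := by group
            rw [e]
            exact mul_mem hu (Cconj (k + 1) u huN _ hv)
        exact inner.2
      · refine ⟨one_mem _, ?_⟩
        intro b _
        have e : 1 * b * 1⁻¹ * b⁻¹ = (1 : G) := by group
        rw [e]; exact one_mem _
      · rintro u v ⟨huC, hu⟩ ⟨hvC, hv⟩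
        refine ⟨mul_mem huC hvC, ?_⟩
        intro b hb
        have e : (u * v) * b * (u * v)⁻¹ * b⁻¹ =
            (u * (v * b * v⁻¹ * b⁻¹) * u⁻¹) * (u * b * u⁻¹ * b⁻¹) := by group
        rw [e]
        exact mul_mem (Cconj (k + 1) u (CleN k huC) _ (hv b hb)) (hu b hb)
    exact main.2 g₂ hg₂
  -- L ≤ C 0
  have LleC0 : L ≤ C 0 := by
    rw [hLsup]
    refine iSup_le fun i => ?_
    have h1 : A i ≤ NT {i} := by
      intro a ha
      exact NT_mem {i} a fun j hj => by rwa [Finset.mem_singleton.1 hj]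
    exact le_trans h1 (le_iSup (fun T : {T : Finset (Fin d) // T.card = 0 + 1} => NT T.1)
      ⟨{i}, Finset.card_singleton i⟩)
  -- lower central series bound
  have lcs_le : ∀ n : ℕ, ((⊤ : Subgroup ↥L).lowerCentralSeries n).map L.subtype ≤ C n := by
    intro n
    induction n with
    | zero =>
      have : ((⊤ : Subgroup ↥L).lowerCentralSeries 0).map L.subtype = L := by
        simp only [Subgroup.lowerCentralSeries_zero]
        rw [← MonoidHom.range_eq_map, Subgroup.range_subtype]
      rw [this]; exact LleC0
    | succ n ih =>
      have h1 : (⊤ : Subgroup ↥L).lowerCentralSeries (n + 1) = ⁅(⊤ : Subgroup ↥L).lowerCentralSeries n, ⊤⁆ := rfl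
      rw [h1, Subgroup.map_commutator]
      have h2 : (⊤ : Subgroup ↥L).map L.subtype = L := by
        rw [← MonoidHom.range_eq_map, Subgroup.range_subtype]
      rw [h2]
      exact le_trans (Subgroup.commutator_mono ih le_rfl) (commCL n)
  have Cd_bot : C d = ⊥ := by
    haveI : IsEmpty {T : Finset (Fin d) // T.card = d + 1} := by
      refine ⟨fun T => ?_⟩
      have h1 := Finset.card_le_univ T.1
      rw [T.2, Fintype.card_fin] at h1
      omega
    exact iSup_of_empty _
  have goal1 : (⊤ : Subgroup ↥L).lowerCentralSeries d = ⊥ := by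
    have h := lcs_le d
    rw [Cd_bot, le_bot_iff] at h
    have h2 := (Subgroup.map_eq_bot_iff _).1 h
    rw [Subgroup.ker_subtype, le_bot_iff] at h2
    exact h2
  -- exponent part
  set E : ℕ → Subgroup G := fun k => ⨆ i : {i : Fin d // (i : ℕ) < k}, A i.1 with hEdef
  have Econj : ∀ (k : ℕ) (g : G), g ∈ N → ∀ a ∈ E k, g * a * g⁻¹ ∈ E k := by
    intro k g hg
    exact conj_iSup' _ g (fun i => Aconj i.1 g hg)
  have LleEd : L ≤ E d := by
    rw [hLsup]
    exact iSup_le fun i => le_iSup (fun j : {j : Fin d // (j : ℕ) < d} => A j.1) ⟨i, i.isLt⟩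
  -- decomposition of E (k+1)
  have decomp : ∀ (k : ℕ) (hk : k < d), ∀ g ∈ E (k + 1),
      ∃ h ∈ E k, ∃ a ∈ A ⟨k, hk⟩, g = h * a := by
    intro k hk g hg
    refine Subgroup.iSup_induction _
      (C := fun g => ∃ h ∈ E k, ∃ a ∈ A ⟨k, hk⟩, g = h * a) hg ?_ ?_ ?_
    · rintro ⟨i, hi⟩ g hgi
      rcases lt_or_eq_of_le (Nat.lt_succ_iff.1 hi) with hlt | heq
      · refine ⟨g, ?_, 1, one_mem _, (mul_one g).symm⟩
        exact le_iSup (fun j : {j : Fin d // (j : ℕ) < k} => A j.1) ⟨i, hlt⟩ hgi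
      · have : i = ⟨k, hk⟩ := Fin.ext heq
        subst this
        exact ⟨1, one_mem _, g, hgi, (one_mul g).symm⟩
    · exact ⟨1, one_mem _, 1, one_mem _, (one_mul 1).symm⟩
    · rintro u v ⟨h₁, hh₁, a₁, ha₁, rfl⟩ ⟨h₂, hh₂, a₂, ha₂, rfl⟩
      refine ⟨h₁ * (a₁ * h₂ * a₁⁻¹), ?_, a₁ * a₂, mul_mem ha₁ ha₂, by group⟩
      exact mul_mem hh₁ (Econj k a₁ (AleN _ ha₁) h₂ hh₂)
  have powstep : ∀ (k : ℕ), k < d → ∀ g ∈ E (k + 1), g ^ m ∈ E k := by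
    intro k hk g hg
    obtain ⟨h, hh, a, ha, rfl⟩ := decomp k hk g hg
    have haN : a ∈ N := AleN _ ha
    have claim : ∀ j : ℕ, ∃ h' ∈ E k, (h * a) ^ j = h' * a ^ j := by
      intro j
      induction j with
      | zero => exact ⟨1, one_mem _, by simp⟩
      | succ j ihj =>
        obtain ⟨h', hh', e⟩ := ihj
        refine ⟨h' * (a ^ j * h * (a ^ j)⁻¹), ?_, ?_⟩
        · exact mul_mem hh' (Econj k (a ^ j) (pow_mem haN j) h hh)
        · rw [pow_succ, e, pow_succ]
          group
    obtain ⟨h', hh', e⟩ := claim m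
    rw [e, Apow _ a ha, mul_one]
    exact hh'
  have Q : ∀ k : ℕ, ∀ g ∈ E k, g ^ m ^ k = 1 := by
    intro k
    induction k with
    | zero =>
      intro g hg
      haveI : IsEmpty {i : Fin d // (i : ℕ) < 0} := ⟨fun i => Nat.not_lt_zero _ i.2⟩
      have : E 0 = ⊥ := iSup_of_empty _
      rw [this, Subgroup.mem_bot] at hg
      simp [hg]
    | succ k ih =>
      intro g hg
      by_cases hk : k < d
      · have h1 : g ^ m ∈ E k := powstep k hk g hg
        rw [pow_succ', pow_mul]
        exact ih _ h1
      · have hle : E (k + 1) ≤ E k := by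
          refine iSup_le fun i => ?_
          exact le_iSup (fun j : {j : Fin d // (j : ℕ) < k} => A j.1)
            ⟨i.1, lt_of_lt_of_le i.1.isLt (le_of_not_gt hk)⟩
        rw [pow_succ, pow_mul, ih g (hle hg), one_pow]
  exact ⟨goal1, fun g hg => Q d g (LleEd hg)⟩
end

section
/- Let w be a group word and G a Cartesian product of groups G_i. Suppose there is a constant ε such that for every i, every subgroup of w(G_i) generated by finitely many w-values of G_i is nilpotent of class at most ε. Then the verbal subgroup w(G) is locally nilpotent. -/
private lemma exists_finset_closure {G : Type*} [Group G] {S : Set G} {x : G}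
    (hx : x ∈ Subgroup.closure S) :
    ∃ T : Finset G, (↑T : Set G) ⊆ S ∧ x ∈ Subgroup.closure (↑T : Set G) := by
  classical
  refine Subgroup.closure_induction ?_ ?_ ?_ ?_ hx
  · intro y hy
    exact ⟨{y}, by simpa using hy, Subgroup.subset_closure (by simp)⟩
  · exact ⟨∅, by simp, Subgroup.one_mem _⟩
  · rintro y z _ _ ⟨T1, hT1, hy⟩ ⟨T2, hT2, hz⟩
    refine ⟨T1 ∪ T2, by simp [Set.union_subset_iff, hT1, hT2], Subgroup.mul_mem _ ?_ ?_⟩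
    · exact Subgroup.closure_mono (by simp [Set.subset_union_left]) hy
    · exact Subgroup.closure_mono (by simp [Set.subset_union_right]) hz
  · rintro y _ ⟨T, hT, hy⟩
    exact ⟨T, hT, Subgroup.inv_mem _ hy⟩

/-- If G is a Cartesian product of groups Gᵢ and there is ε such that in every Gᵢ each
subgroup generated by finitely many w-values is nilpotent of class at most ε, then the
verbal subgroup w(G) is locally nilpotent. -/
theorem stmt_12 {ι : Type*} (G : ι → Type*) [∀ i, Group (G i)]
    (k : ℕ) (w : FreeGroup (Fin k))
    (hε : ∃ ε : ℕ, ∀ i : ι, ∀ H : Subgroup (G i),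
        (∃ S : Finset (G i),
            (↑S : Set (G i)) ⊆ {x | ∃ g : Fin k → G i, FreeGroup.lift g w = x} ∧
            Subgroup.closure (↑S : Set (G i)) = H) →
        Subgroup.lowerCentralSeries (⊤ : Subgroup ↥H) ε = ⊥) :
    ∀ H : Subgroup (∀ i, G i),
      H ≤ Subgroup.closure {x | ∃ g : Fin k → (∀ i, G i), FreeGroup.lift g w = x} →
      H.FG → Group.IsNilpotent ↥H := by
  obtain ⟨ε, hε⟩ := hε
  intro H hHle hHfg
  set S : Set (∀ i, G i) := {x | ∃ g : Fin k → (∀ i, G i), FreeGroup.lift g w = x} with hS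
  -- find a finite set T of w-values with H ≤ closure T
  obtain ⟨F, hF⟩ := hHfg
  have hfin : ∀ x ∈ F, ∃ T : Finset (∀ i, G i),
      (↑T : Set (∀ i, G i)) ⊆ S ∧ x ∈ Subgroup.closure (↑T : Set (∀ i, G i)) := by
    intro x hx
    exact exists_finset_closure (hHle (hF ▸ Subgroup.subset_closure hx))
  choose T hTsub hTmem using hfin
  classical
  let Tt : Finset (∀ i, G i) := F.attach.biUnion fun x => T x.1 x.2
  have hTtS : (↑Tt : Set (∀ i, G i)) ⊆ S := by
    intro y hy
    simp only [Tt, Finset.coe_biUnion, Set.mem_iUnion, Finset.mem_coe] at hy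
    obtain ⟨x, -, hy⟩ := hy
    exact hTsub x.1 x.2 hy
  set K : Subgroup (∀ i, G i) := Subgroup.closure (↑Tt : Set (∀ i, G i)) with hK
  have hHK : H ≤ K := by
    rw [← hF, Subgroup.closure_le]
    intro x hx
    refine Subgroup.closure_mono ?_ (hTmem x hx)
    intro y hy
    simp only [Tt, Finset.coe_biUnion, Set.mem_iUnion, Finset.mem_coe]
    exact ⟨⟨x, hx⟩, by simp, hy⟩
  -- w-values project to w-values
  have hproj : ∀ i : ι, ∀ x ∈ S, ∃ g : Fin k → G i, FreeGroup.lift g w = x i := by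
    rintro i x ⟨g, rfl⟩
    refine ⟨fun j => g j i, ?_⟩
    have : (Pi.evalMonoidHom G i).comp (FreeGroup.lift g) =
        FreeGroup.lift (fun j => g j i) := by
      apply FreeGroup.ext_hom
      intro j
      simp
    exact (DFunLike.congr_fun this w).symm
  -- the component subgroups
  let Ti : ∀ i, Finset (G i) := fun i => Tt.image fun x => x i
  let Ki : ∀ i, Subgroup (G i) := fun i => Subgroup.closure (↑(Ti i) : Set (G i))
  have hKi : ∀ i, Subgroup.lowerCentralSeries (⊤ : Subgroup ↥(Ki i)) ε = ⊥ := by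
    intro i
    refine hε i (Ki i) ⟨Ti i, ?_, rfl⟩
    intro y hy
    simp only [Ti, Finset.coe_image, Set.mem_image, Finset.mem_coe] at hy
    obtain ⟨x, hx, rfl⟩ := hy
    exact hproj i x (hTtS hx)
  -- the embedding of K into the product of the Ki
  have hKmem : ∀ (x : ↥K) (i : ι), (x : ∀ i, G i) i ∈ Ki i := by
    intro x i
    have hx : (x : ∀ i, G i) ∈ Subgroup.closure (↑Tt : Set (∀ i, G i)) := x.2
    refine Subgroup.closure_induction (fun y hy => ?_) (by exact Subgroup.one_mem _) ?_ ?_ hx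
    · exact Subgroup.subset_closure (by
        simp only [Ti, Finset.coe_image, Set.mem_image, Finset.mem_coe]
        exact ⟨y, hy, rfl⟩)
    · intro y z _ _ hy hz
      simpa using Subgroup.mul_mem _ hy hz
    · intro y _ hy
      simpa using Subgroup.inv_mem _ hy
  let ψ : ↥K →* (∀ i, ↥(Ki i)) :=
    { toFun := fun x => fun i => ⟨(x : ∀ i, G i) i, hKmem x i⟩
      map_one' := by ext i; simp
      map_mul' := fun x y => by ext i; simp }
  have hψinj : Function.Injective ψ := by
    intro x y hxy
    ext i
    exact congrArg (Subtype.val) (congrFun hxy i)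
  -- lower central series of K dies at ε
  have hKlcs : Subgroup.lowerCentralSeries (⊤ : Subgroup ↥K) ε = ⊥ := by
    refine (Subgroup.map_eq_bot_iff_of_injective (Subgroup.lowerCentralSeries (⊤ : Subgroup ↥K) ε) hψinj).mp ?_
    rw [eq_bot_iff]
    refine le_trans (lowerCentralSeries.map ψ ε) ?_
    refine le_trans (Subgroup.top_lowerCentralSeries_pi_le ε) ?_
    rw [← eq_bot_iff, Subgroup.pi_eq_bot_iff]
    intro i
    exact hKi i
  have hKnil : Group.IsNilpotent ↥K := nilpotent_iff_lowerCentralSeries.mpr ⟨ε, hKlcs⟩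
  exact nilpotent_of_mulEquiv (Subgroup.subgroupOfEquivOfLe hHK)
end

section
/- Let G be a soluble group and v a multilinear commutator word such that every v-value in G has finite order. Then the verbal subgroup v(G) is locally finite. -/
/-- Shapes of multilinear commutator words. -/
inductive CommTree : Type
  | leaf : CommTree
  | node : CommTree → CommTree → CommTree

/-- The weight of a multilinear commutator word. -/
def CommTree.weight : CommTree → ℕ
  | .leaf => 1
  | .node a b => a.weight + b.weight

/-- Evaluation of a multilinear commutator word, using [a,b] = a⁻¹b⁻¹ab. -/
def CommTree.eval {G : Type*} [Group G] : CommTree → (ℕ → G) → G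
  | .leaf, f => f 0
  | .node a b, f =>
      (a.eval f)⁻¹ * (b.eval fun n => f (n + a.weight))⁻¹ *
        a.eval f * b.eval fun n => f (n + a.weight)

namespace Stmt16

open Subgroup

open scoped commutatorElement

variable {G : Type*} [Group G] {H' : Type*} [Group H']

/-! ### Commutator identities in the `a⁻¹b⁻¹ab` convention -/

def cm (a b : G) : G := a⁻¹ * b⁻¹ * a * b

lemma cm_inv (a b : G) : (cm a b)⁻¹ = cm b a := by unfold cm; group

lemma hall_witt (p q r : G) :
    (q⁻¹ * cm (cm p q⁻¹) r * q) * (r⁻¹ * cm (cm q r⁻¹) p * r) *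
      (p⁻¹ * cm (cm r p⁻¹) q * p) = 1 := by unfold cm; group

lemma cm_mul_left (x y t : G) : cm (x*y) t = (y⁻¹ * cm x t * y) * cm y t := by unfold cm; group

lemma cm_inv_left (x t : G) : cm x⁻¹ t = x * (cm x t)⁻¹ * x⁻¹ := by unfold cm; group

lemma cm_inv_right (t x : G) : cm t x⁻¹ = x * (cm t x)⁻¹ * x⁻¹ := by unfold cm; group

lemma cm_one_left (t : G) : cm 1 t = 1 := by unfold cm; group

lemma cm_eq_comm (x y : G) : cm x y = ⁅x⁻¹, y⁻¹⁆ := by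
  rw [commutatorElement_def]; unfold cm; group

lemma cm_eq_one_iff {x y : G} : cm x y = 1 ↔ Commute x y := by
  rw [cm_eq_comm, commutatorElement_eq_one_iff_commute]
  exact ⟨fun h => by simpa using h.inv_inv, fun h => h.inv_inv⟩

/-! ### Values of a multilinear commutator word -/

/-- The set of `v`-values in a group. -/
def S (v : CommTree) : Set G := {x | ∃ f : ℕ → G, v.eval f = x}

lemma eval_node (a b : CommTree) (f : ℕ → G) :
    (CommTree.node a b).eval f = cm (a.eval f) (b.eval fun n => f (n + a.weight)) := rfl

lemma mem_S_self (v : CommTree) (f : ℕ → G) : v.eval f ∈ (S v : Set G) := ⟨f, rfl⟩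

lemma mem_S_leaf (x : G) : x ∈ (S .leaf : Set G) := ⟨fun _ => x, rfl⟩

lemma eval_congr : ∀ (v : CommTree) (f g : ℕ → G), (∀ n < v.weight, f n = g n) →
    v.eval f = v.eval g
  | .leaf, f, g, h => h 0 (by simp [CommTree.weight])
  | .node a b, f, g, h => by
    have ha := eval_congr a f g (fun n hn => h n (by simp [CommTree.weight]; omega))
    have hb := eval_congr b (fun n => f (n + a.weight)) (fun n => g (n + a.weight))
      (fun n hn => h (n + a.weight) (by simp [CommTree.weight]; omega))
    simp only [CommTree.eval, ha, hb]

lemma cm_mem_S_node {v1 v2 : CommTree} {s t : G} (hs : s ∈ (S v1 : Set G))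
    (ht : t ∈ (S v2 : Set G)) : cm s t ∈ (S (.node v1 v2) : Set G) := by
  obtain ⟨f1, rfl⟩ := hs
  obtain ⟨f2, rfl⟩ := ht
  refine ⟨fun n => if n < v1.weight then f1 n else f2 (n - v1.weight), ?_⟩
  rw [eval_node]
  congr 1
  · exact eval_congr _ _ _ (fun n hn => by simp [hn])
  · refine eval_congr _ _ _ (fun n hn => ?_)
    have : ¬ (n + v1.weight < v1.weight) := by omega
    simp [this]

lemma mem_S_node {v1 v2 : CommTree} {x : G} :
    x ∈ (S (.node v1 v2) : Set G) ↔ ∃ s ∈ (S v1 : Set G), ∃ t ∈ (S v2 : Set G), x = cm s t := by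
  constructor
  · rintro ⟨f, rfl⟩
    exact ⟨_, mem_S_self v1 f, _, mem_S_self v2 _, (eval_node ..)⟩
  · rintro ⟨s, hs, t, ht, rfl⟩
    exact cm_mem_S_node hs ht

lemma eval_map (φ : G →* H') : ∀ (v : CommTree) (f : ℕ → G),
    φ (v.eval f) = v.eval (fun n => φ (f n))
  | .leaf, f => rfl
  | .node a b, f => by
    simp only [CommTree.eval, map_mul, map_inv, eval_map φ a f, eval_map φ b]

lemma S_map (φ : G →* H') {x : G} {v : CommTree} (hx : x ∈ (S v : Set G)) :
    φ x ∈ (S v : Set H') := by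
  obtain ⟨f, rfl⟩ := hx
  exact ⟨fun n => φ (f n), (eval_map φ v f).symm⟩

lemma S_surj {φ : G →* H'} (hφ : Function.Surjective φ) {y : H'} {v : CommTree}
    (hy : y ∈ (S v : Set H')) : ∃ x ∈ (S v : Set G), φ x = y := by
  obtain ⟨f, rfl⟩ := hy
  refine ⟨v.eval (fun n => Function.surjInv hφ (f n)), mem_S_self _ _, ?_⟩
  rw [eval_map]
  exact eval_congr _ _ _ (fun n _ => Function.surjInv_eq hφ (f n))

lemma eval_conj : ∀ (v : CommTree) (f : ℕ → G) (g : G),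
    v.eval (fun n => g⁻¹ * f n * g) = g⁻¹ * v.eval f * g
  | .leaf, f, g => rfl
  | .node a b, f, g => by
    rw [eval_node, eval_node]
    show cm (a.eval fun n => g⁻¹ * f n * g) (b.eval fun n => g⁻¹ * f (n + a.weight) * g) = _
    rw [eval_conj a f g, eval_conj b (fun n => f (n + a.weight)) g]
    unfold cm; group

lemma S_conj {x : G} {v : CommTree} (hx : x ∈ (S v : Set G)) (g : G) :
    g⁻¹ * x * g ∈ (S v : Set G) := by
  obtain ⟨f, rfl⟩ := hx
  exact ⟨fun n => g⁻¹ * f n * g, eval_conj v f g⟩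

/-! ### The key centralizing argument -/

section withA

variable {A : Subgroup G} (hA : A.Normal) (habel : ∀ a ∈ A, ∀ b ∈ A, a * b = b * a)

include hA in
lemma cm_mem_right {a : G} (t : G) (ha : a ∈ A) : cm t a ∈ A := by
  have h1 : t⁻¹ * a⁻¹ * t ∈ A := by
    have := hA.conj_mem a⁻¹ (inv_mem ha) t⁻¹
    simpa using this
  have h2 : cm t a = (t⁻¹ * a⁻¹ * t) * a := by unfold cm; group
  rw [h2]; exact mul_mem h1 ha

include hA in
lemma cm_mem_left {a : G} (t : G) (ha : a ∈ A) : cm a t ∈ A := by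
  have h1 : t⁻¹ * a * t ∈ A := by
    have := hA.conj_mem a ha t⁻¹; simpa using this
  have h2 : cm a t = a⁻¹ * (t⁻¹ * a * t) := by unfold cm; group
  rw [h2]; exact mul_mem (inv_mem ha) h1

/-- The subgroup generated by the `v`-values lying in `A`. -/
def I (A : Subgroup G) (v : CommTree) : Subgroup G := closure (S v ∩ (A : Set G))

include hA in
lemma I_normal (v : CommTree) : (I A v).Normal := by
  constructor
  intro x hx g
  have key : ∀ y, y ∈ closure ((S v : Set G) ∩ (A : Set G)) → ∀ g : G,
      g * y * g⁻¹ ∈ I A v := by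
    intro y hy
    induction hy using closure_induction with
    | mem z hz =>
      intro g
      refine subset_closure ⟨?_, hA.conj_mem z hz.2 g⟩
      have := S_conj hz.1 g⁻¹
      simpa using this
    | one => intro g; simpa using one_mem _
    | mul z w hz hw ihz ihw =>
      intro g
      have : g * (z * w) * g⁻¹ = (g * z * g⁻¹) * (g * w * g⁻¹) := by group
      rw [this]; exact mul_mem (ihz g) (ihw g)
    | inv z hz ihz =>
      intro g
      have : g * z⁻¹ * g⁻¹ = (g * z * g⁻¹)⁻¹ := by group
      rw [this]; exact inv_mem (ihz g)
  exact key x hx g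

/-- Lifting lemma: if `cm c t` lies in a normal subgroup `J` for all generators `c`,
then it does for all elements of the closure. -/
lemma cm_left_closure {Sset : Set G} {J : Subgroup G} (hJ : J.Normal) (t : G)
    (hgen : ∀ c ∈ Sset, cm c t ∈ J) : ∀ z ∈ closure Sset, cm z t ∈ J := by
  intro z hz
  induction hz using closure_induction with
  | mem c hc => exact hgen c hc
  | one => rw [cm_one_left]; exact one_mem _
  | mul x y hx hy ihx ihy =>
    rw [cm_mul_left]
    exact mul_mem (by simpa using hJ.conj_mem _ ihx y⁻¹) ihy
  | inv x hx ihx =>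
    rw [cm_inv_left]
    exact by simpa using hJ.conj_mem _ (inv_mem ihx) x

include hA in
lemma lift_left {v1 v2 : CommTree} {t1 : G} (ht1 : t1 ∈ (S v1 : Set G)) :
    ∀ z ∈ I A v2, cm z t1 ∈ I A (.node v1 v2) := by
  refine cm_left_closure (I_normal hA _) t1 ?_
  rintro c ⟨hcS, hcA⟩
  have h1 : cm t1 c ∈ I A (.node v1 v2) :=
    subset_closure ⟨cm_mem_S_node ht1 hcS, cm_mem_right hA t1 hcA⟩
  rw [show cm c t1 = (cm t1 c)⁻¹ from (cm_inv t1 c) ▸ rfl]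
  exact inv_mem h1

include hA in
lemma lift_right {v1 v2 : CommTree} {t2 : G} (ht2 : t2 ∈ (S v2 : Set G)) :
    ∀ y ∈ I A v1, cm y t2 ∈ I A (.node v1 v2) := by
  refine cm_left_closure (I_normal hA _) t2 ?_
  rintro c ⟨hcS, hcA⟩
  exact subset_closure ⟨cm_mem_S_node hcS ht2, cm_mem_left hA t2 hcA⟩

include hA in
/-- For any `v`-value `t` and any `a ∈ A`, the commutator `cm t a` lies in the subgroup
generated by the `v`-values lying inside `A`.  (Hall–Witt juggling.) -/
lemma Qlem : ∀ (v : CommTree) {t : G}, t ∈ (S v : Set G) → ∀ {a : G}, a ∈ A →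
    cm t a ∈ I A v := by
  intro v
  induction v with
  | leaf =>
    intro t _ a ha
    exact subset_closure ⟨mem_S_leaf _, cm_mem_right hA t ha⟩
  | node v1 v2 ih1 ih2 =>
    intro t ht a ha
    obtain ⟨t1, ht1, t2, ht2, rfl⟩ := mem_S_node.mp ht
    have hInorm : (I A (.node v1 v2)).Normal := I_normal hA _
    have hz : cm t2⁻¹ a⁻¹ ∈ I A v2 := by
      rw [cm_inv_left]
      have h1 : cm t2 a⁻¹ ∈ I A v2 := ih2 ht2 (inv_mem ha)
      exact by simpa using (I_normal hA v2).conj_mem _ (inv_mem h1) t2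
    have hy : cm a t1⁻¹ ∈ I A v1 := by
      have h0 : cm a t1⁻¹ = t1 * cm t1 a * t1⁻¹ := by
        rw [show cm a t1⁻¹ = t1 * (cm a t1)⁻¹ * t1⁻¹ from cm_inv_right a t1,
          show (cm a t1)⁻¹ = cm t1 a from cm_inv a t1]
      rw [h0]
      exact (I_normal hA v1).conj_mem _ (ih1 ht1 ha) t1
    have hT2 : a⁻¹ * cm (cm t2⁻¹ a⁻¹) t1 * a ∈ I A (.node v1 v2) := by
      have := lift_left hA ht1 _ hz
      exact by simpa using hInorm.conj_mem _ this a⁻¹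
    have hT3 : t1⁻¹ * cm (cm a t1⁻¹) t2⁻¹ * t1 ∈ I A (.node v1 v2) := by
      have h1 : cm (cm a t1⁻¹) t2 ∈ I A (.node v1 v2) := lift_right hA ht2 _ hy
      have h2 : cm (cm a t1⁻¹) t2⁻¹ ∈ I A (.node v1 v2) := by
        rw [cm_inv_right]
        exact by simpa using hInorm.conj_mem _ (inv_mem h1) t2
      exact by simpa using hInorm.conj_mem _ h2 t1⁻¹
    have hw := hall_witt t1 t2⁻¹ a
    rw [inv_inv] at hw
    set X := t2 * cm (cm t1 t2) a * t2⁻¹ with hX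
    set Y := a⁻¹ * cm (cm t2⁻¹ a⁻¹) t1 * a with hYdef
    set Z := t1⁻¹ * cm (cm a t1⁻¹) t2⁻¹ * t1 with hZdef
    have hXmem : X ∈ I A (.node v1 v2) := by
      have h1 : X * Y = Z⁻¹ := mul_eq_one_iff_eq_inv.mp hw
      have h2 : X = Z⁻¹ * Y⁻¹ := by rw [← h1]; group
      rw [h2]; exact mul_mem (inv_mem hT3) (inv_mem hT2)
    have : cm (cm t1 t2) a = t2⁻¹ * X * t2 := by rw [hX]; group
    rw [this]
    exact by simpa using hInorm.conj_mem _ hXmem t2⁻¹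

omit hA in
lemma commute_I {w : CommTree} {s : G}
    (hone : ∀ c ∈ (S w : Set G) ∩ (A : Set G), Commute s c) :
    ∀ u ∈ I A w, Commute s u := by
  intro u hu
  induction hu using closure_induction with
  | mem c hc => exact hone c hc
  | one => exact Commute.one_right s
  | mul x y _ _ ihx ihy => exact ihx.mul_right ihy
  | inv x _ ihx => exact ihx.inv_right

include hA in
/-- Crux: if `A` is a torsion-free abelian normal subgroup and all `v`-values are torsion,
then every `v`-value centralizes `A`. -/
lemma centralizeAll (htf : ∀ a ∈ A, IsOfFinOrder a → a = 1)
    (v : CommTree) (hfin : ∀ x ∈ (S v : Set G), IsOfFinOrder x) :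
    ∀ x ∈ (S v : Set G), ∀ a ∈ A, Commute x a := by
  cases v with
  | leaf =>
    intro x _ a ha
    have h1 : a = 1 := htf a ha (hfin a (mem_S_leaf a))
    rw [h1]; exact Commute.one_right x
  | node v1 v2 =>
    intro x hx a ha
    obtain ⟨s, hs, t, ht, rfl⟩ := mem_S_node.mp hx
    have hs2 : ∀ u ∈ I A v2, Commute s u := by
      refine commute_I ?_
      rintro c ⟨hcS, hcA⟩
      have h1 : cm s c ∈ (S (.node v1 v2) : Set G) := cm_mem_S_node hs hcS
      have h2 : cm s c ∈ A := cm_mem_right hA s hcA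
      exact cm_eq_one_iff.mp (htf _ h2 (hfin _ h1))
    have ht1 : ∀ u ∈ I A v1, Commute t u := by
      refine commute_I ?_
      rintro c ⟨hcS, hcA⟩
      have h1 : cm c t ∈ (S (.node v1 v2) : Set G) := cm_mem_S_node hcS ht
      have h2 : cm c t ∈ A := cm_mem_left hA t hcA
      exact (cm_eq_one_iff.mp (htf _ h2 (hfin _ h1))).symm
    have hz : cm t⁻¹ a⁻¹ ∈ I A v2 := by
      rw [cm_inv_left]
      have h1 : cm t a⁻¹ ∈ I A v2 := Qlem hA v2 ht (inv_mem ha)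
      exact by simpa using (I_normal hA v2).conj_mem _ (inv_mem h1) t
    have hy : cm a s⁻¹ ∈ I A v1 := by
      have h0 : cm a s⁻¹ = s * cm s a * s⁻¹ := by
        rw [show cm a s⁻¹ = s * (cm a s)⁻¹ * s⁻¹ from cm_inv_right a s,
          show (cm a s)⁻¹ = cm s a from cm_inv a s]
      rw [h0]
      exact (I_normal hA v1).conj_mem _ (Qlem hA v1 hs ha) s
    have hU : cm (cm t⁻¹ a⁻¹) s = 1 := cm_eq_one_iff.mpr ((hs2 _ hz).symm)
    have hV : cm (cm a s⁻¹) t⁻¹ = 1 := cm_eq_one_iff.mpr (((ht1 _ hy).inv_left).symm)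
    have hw := hall_witt s t⁻¹ a
    rw [inv_inv, hU, hV] at hw
    have hw2 : t * cm (cm s t) a * t⁻¹ = 1 := by
      calc t * cm (cm s t) a * t⁻¹
          = (t * cm (cm s t) a * t⁻¹) * (a⁻¹ * 1 * a) * (s⁻¹ * 1 * s) := by group
        _ = 1 := hw
    have : cm (cm s t) a = 1 := by
      have := congrArg (fun g => t⁻¹ * g * t) hw2
      simpa [mul_assoc] using this
    exact cm_eq_one_iff.mp this

end withA

/-! ### Auxiliary finiteness lemmas -/

lemma finOrder_coe_iff {K : Subgroup G} (g : K) : IsOfFinOrder (g : G) ↔ IsOfFinOrder g := by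
  rw [← orderOf_pos_iff, ← orderOf_pos_iff, Subgroup.orderOf_coe]

lemma finite_of_fg_torsion_comm (W : Type*) [Group W] (hfg : Group.FG W)
    (htor : ∀ w : W, IsOfFinOrder w) (hcomm : ∀ a b : W, a * b = b * a) : Finite W := by
  letI : CommGroup W := { (inferInstance : Group W) with mul_comm := hcomm }
  classical
  obtain ⟨Sset, hclos, hSfin⟩ := Group.fg_iff.mp hfg
  have key : ∀ (T : Finset W), ((closure (T : Set W) : Subgroup W) : Set W).Finite := by
    intro T
    induction T using Finset.induction_on with
    | empty => simp [Subgroup.closure_empty]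
    | @insert x T' _ ih =>
      rw [Finset.coe_insert, Set.insert_eq, Subgroup.closure_union]
      have h1 : ((closure {x} : Subgroup W) : Set W).Finite := by
        rw [← zpowers_eq_closure]
        exact finite_zpowers.mpr (htor x)
      refine Set.Finite.subset (h1.mul ih) ?_
      intro g hg
      obtain ⟨y, hy, z, hz, rfl⟩ := Subgroup.mem_sup.mp hg
      exact Set.mul_mem_mul hy hz
  have : (Set.univ : Set W).Finite := by
    have h2 := key hSfin.toFinset
    rw [Set.Finite.coe_toFinset, hclos] at h2
    simpa using h2
  exact Set.finite_univ_iff.mp this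

lemma mem_closure_finset {Sset : Set G} {x : G} (hx : x ∈ closure Sset) :
    ∃ T : Set G, T.Finite ∧ T ⊆ Sset ∧ x ∈ closure T := by
  induction hx using closure_induction with
  | mem y hy => exact ⟨{y}, Set.finite_singleton y, by simpa using hy, subset_closure (by simp)⟩
  | one => exact ⟨∅, Set.finite_empty, by simp, one_mem _⟩
  | mul y z _ _ ihy ihz =>
    obtain ⟨T1, hf1, hT1, hy1⟩ := ihy
    obtain ⟨T2, hf2, hT2, hz1⟩ := ihz
    refine ⟨T1 ∪ T2, hf1.union hf2, Set.union_subset hT1 hT2, mul_mem ?_ ?_⟩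
    · exact closure_mono Set.subset_union_left hy1
    · exact closure_mono Set.subset_union_right hz1
  | inv y _ ihy =>
    obtain ⟨T1, hf1, hT1, hy1⟩ := ihy
    exact ⟨T1, hf1, hT1, inv_mem hy1⟩

lemma abelian_of_derived {n : ℕ} (h : derivedSeries G (n+1) = ⊥) :
    ∀ a ∈ derivedSeries G n, ∀ b ∈ derivedSeries G n, a * b = b * a := by
  intro a ha b hb
  have h1 : ⁅a, b⁆ ∈ derivedSeries G (n+1) := by
    rw [derivedSeries_succ]
    exact Subgroup.commutator_mem_commutator ha hb
  rw [h] at h1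
  have h2 : ⁅a, b⁆ = 1 := by simpa using h1
  exact commutatorElement_eq_one_iff_commute.mp h2

/-- The torsion part of an abelian normal subgroup. -/
def torA (A : Subgroup G) (habel : ∀ a ∈ A, ∀ b ∈ A, a * b = b * a) : Subgroup G where
  carrier := {g | g ∈ A ∧ IsOfFinOrder g}
  one_mem' := ⟨one_mem A, IsOfFinOrder.one⟩
  mul_mem' := by
    rintro a b ⟨haA, haT⟩ ⟨hbA, hbT⟩
    exact ⟨mul_mem haA hbA, Commute.isOfFinOrder_mul (habel a haA b hbA) haT hbT⟩
  inv_mem' := by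
    rintro a ⟨haA, haT⟩
    exact ⟨inv_mem haA, haT.inv⟩

lemma torA_normal {A : Subgroup G} (hA : A.Normal) (habel) : (torA A habel).Normal := by
  constructor
  rintro x ⟨hxA, hxT⟩ g
  refine ⟨hA.conj_mem x hxA g, ?_⟩
  have : g * x * g⁻¹ = (MulAut.conj g) x := by simp [MulAut.conj_apply]
  rw [this]
  exact ((MulAut.conj g).toMonoidHom : G →* G).isOfFinOrder hxT


/-! ### The main induction -/

universe u

lemma main_induction : ∀ (n : ℕ) (G : Type u) (_ : Group G), derivedSeries G n = ⊥ →
    ∀ v : CommTree, (∀ x ∈ (S v : Set G), IsOfFinOrder x) →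
    ∀ H : Subgroup G, H ≤ Subgroup.closure (S v) → H.FG → Finite H := by
  intro n
  induction n with
  | zero =>
    intro G _ hbot v _ H _ _
    rw [derivedSeries_zero] at hbot
    have hsub : Subsingleton G := by
      constructor
      intro a b
      have ha : a ∈ (⊥ : Subgroup G) := hbot ▸ mem_top a
      have hb : b ∈ (⊥ : Subgroup G) := hbot ▸ mem_top b
      rw [Subgroup.mem_bot] at ha hb
      rw [ha, hb]
    haveI := hsub
    exact Finite.of_subsingleton
  | succ n IH =>
    intro G _ hbot v hfin H hle hHfg
    suffices key : ∀ (xs : Set G), xs.Finite → xs ⊆ S v → Finite (closure xs) by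
      obtain ⟨hs, rfl⟩ := hHfg
      choose T hTfin hTsub hTmem using
        fun (h : ((hs : Set G) : Set G)) => mem_closure_finset (hle (subset_closure h.2))
      set Tall : Set G := ⋃ (h : ((hs : Set G) : Set G)), T h with hTall
      have hfinTall : Tall.Finite := by
        haveI : Finite ((hs : Set G) : Set G) := hs.finite_toSet
        exact Set.finite_iUnion hTfin
      have hsubTall : Tall ⊆ S v := Set.iUnion_subset hTsub
      have hleK : closure (hs : Set G) ≤ closure Tall := by
        rw [closure_le]
        intro h hh
        exact closure_mono (Set.subset_iUnion T ⟨h, hh⟩) (hTmem ⟨h, hh⟩)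
      haveI : Finite (closure Tall) := key Tall hfinTall hsubTall
      exact Finite.of_injective (Subgroup.inclusion hleK) (Subgroup.inclusion_injective hleK)
    intro xs hxsfin hxs
    -- set up the quotient by the torsion of the last term of the derived series
    have hAnorm : (derivedSeries G n).Normal := derivedSeries_normal G n
    have habel : ∀ a ∈ derivedSeries G n, ∀ b ∈ derivedSeries G n, a * b = b * a :=
      abelian_of_derived hbot
    set T' := torA (derivedSeries G n) habel with hT'def
    haveI hT'norm : T'.Normal := torA_normal hAnorm habel
    set Q1 := G ⧸ T' with hQ1
    set π : G →* Q1 := QuotientGroup.mk' T' with hπ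
    have hπsurj : Function.Surjective π := QuotientGroup.mk'_surjective T'
    have hser1 : derivedSeries Q1 (n+1) = ⊥ := by
      rw [← map_derivedSeries_eq hπsurj (n+1), hbot, Subgroup.map_bot]
    set A1 := derivedSeries Q1 n with hA1
    haveI hA1norm : A1.Normal := derivedSeries_normal Q1 n
    have habel1 : ∀ a ∈ A1, ∀ b ∈ A1, a * b = b * a := abelian_of_derived hser1
    have hA1map : (derivedSeries G n).map π = A1 := map_derivedSeries_eq hπsurj n
    have htf1 : ∀ a ∈ A1, IsOfFinOrder a → a = 1 := by
      intro a ha hfa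
      rw [← hA1map] at ha
      obtain ⟨g, hg, rfl⟩ := ha
      obtain ⟨k, hk, hpow⟩ := isOfFinOrder_iff_pow_eq_one.mp hfa
      have hπk : π (g ^ k) = 1 := by rw [map_pow]; exact hpow
      have hker : g ^ k ∈ T' := by
        rwa [← QuotientGroup.ker_mk' T', MonoidHom.mem_ker]
      have hgord : IsOfFinOrder g := hker.2.of_pow hk.ne'
      have : g ∈ T' := ⟨hg, hgord⟩
      show π g = 1
      rw [hπ, QuotientGroup.mk'_apply, QuotientGroup.eq_one_iff]
      exact this
    have hfin1 : ∀ y ∈ (S v : Set Q1), IsOfFinOrder y := by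
      intro y hy
      obtain ⟨x, hxS, rfl⟩ := S_surj hπsurj hy
      exact π.isOfFinOrder (hfin x hxS)
    have hcent : ∀ x ∈ (S v : Set Q1), ∀ a ∈ A1, Commute x a :=
      centralizeAll hA1norm htf1 v hfin1
    -- second quotient
    set Q2 := Q1 ⧸ A1 with hQ2
    set φ : Q1 →* Q2 := QuotientGroup.mk' A1 with hφ
    have hφsurj : Function.Surjective φ := QuotientGroup.mk'_surjective A1
    have hser2 : derivedSeries Q2 n = ⊥ := by
      rw [← map_derivedSeries_eq hφsurj n, eq_bot_iff]
      rintro x hx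
      rw [Subgroup.mem_map] at hx
      obtain ⟨a, ha, rfl⟩ := hx
      rw [Subgroup.mem_bot, hφ, QuotientGroup.mk'_apply, QuotientGroup.eq_one_iff]
      exact ha
    have hfin2 : ∀ y ∈ (S v : Set Q2), IsOfFinOrder y := by
      intro y hy
      obtain ⟨x, hxS, rfl⟩ := S_surj hφsurj hy
      exact φ.isOfFinOrder (hfin1 x hxS)
    -- the three subgroups
    set K : Subgroup G := closure xs with hK
    set Kq : Subgroup Q1 := closure (π '' xs) with hKq
    set L : Subgroup Q2 := closure (φ '' (π '' xs)) with hL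
    have hLfin : Finite L := by
      refine IH Q2 inferInstance hser2 v hfin2 L ?_ ?_
      · rw [closure_le]
        rintro y ⟨y1, ⟨x, hx, rfl⟩, rfl⟩
        exact subset_closure (S_map φ (S_map π (hxs hx)))
      · rw [Subgroup.fg_iff]
        exact ⟨φ '' (π '' xs), rfl, ((hxsfin.image _).image _)⟩
    -- transfer argument: Kq is finite
    have hKqfin : Finite Kq := by
      set ψ : Kq →* Q2 := φ.comp Kq.subtype with hψ
      have hrange : ψ.range = L := by
        rw [hψ, MonoidHom.range_comp, Subgroup.range_subtype, hKq, MonoidHom.map_closure, hL]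
      haveI : Finite ψ.range := by rw [hrange]; exact hLfin
      haveI hQfin : Finite (Kq ⧸ ψ.ker) :=
        Finite.of_equiv _ (QuotientGroup.quotientKerEquivRange ψ).symm.toEquiv
      have hkerA : ∀ m : Kq, m ∈ ψ.ker ↔ (m : Q1) ∈ A1 := by
        intro m
        rw [MonoidHom.mem_ker, hψ, MonoidHom.comp_apply, hφ, QuotientGroup.mk'_apply,
          QuotientGroup.eq_one_iff]
        rfl
      have hKcommA : ∀ g ∈ Kq, ∀ a ∈ A1, Commute g a := by
        have hsub : Kq ≤ Subgroup.centralizer (A1 : Set Q1) := by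
          rw [hKq, closure_le]
          rintro y ⟨x, hx, rfl⟩
          rw [SetLike.mem_coe, Subgroup.mem_centralizer_iff]
          intro h hh
          exact (hcent (π x) (S_map π (hxs hx)) h hh).symm.eq
        intro g hg a ha
        have := Subgroup.mem_centralizer_iff.mp (hsub hg) a ha
        exact this.symm
      have hMcent : ψ.ker ≤ Subgroup.center Kq := by
        intro m hm
        rw [Subgroup.mem_center_iff]
        intro g
        have := hKcommA (g : Q1) g.2 (m : Q1) ((hkerA m).mp hm)
        exact Subtype.ext this.eq
      haveI hFIker : ψ.ker.FiniteIndex := Subgroup.finiteIndex_of_finite_quotient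
      haveI hFIcen : (Subgroup.center Kq).FiniteIndex := Subgroup.finiteIndex_of_le hMcent
      -- every element of Kq has finite order, via the transfer homomorphism
      have htorKq : ∀ k : Kq, IsOfFinOrder k := by
        have himg : (⇑Kq.subtype) '' ((fun g : Kq => (g : Q1)) ⁻¹' (π '' xs)) = π '' xs := by
          ext y
          constructor
          · rintro ⟨g, hg, rfl⟩; exact hg
          · intro hy
            exact ⟨⟨y, subset_closure hy⟩, hy, rfl⟩
        have htop : (⊤ : Subgroup Kq) =
            Subgroup.closure ((fun g : Kq => (g : Q1)) ⁻¹' (π '' xs)) := by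
          apply Subgroup.map_injective Kq.subtype_injective
          rw [MonoidHom.map_closure, ← MonoidHom.range_eq_map, Subgroup.range_subtype, himg, hKq]
        set tr := MonoidHom.transferCenterPow Kq with htr
        have hidx : (Subgroup.center Kq).index ≠ 0 := hFIcen.index_ne_zero
        intro k
        have hk : k ∈ Subgroup.closure ((fun g : Kq => (g : Q1)) ⁻¹' (π '' xs)) :=
          htop ▸ Subgroup.mem_top k
        have htrk : IsOfFinOrder (tr k) := by
          induction hk using closure_induction with
          | mem y hy =>
            have h1 : IsOfFinOrder (y : Q1) := by
              obtain ⟨x, hx, hxy⟩ := hy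
              have he : (y : Q1) = π x := hxy.symm
              rw [he]
              exact π.isOfFinOrder (hfin x (hxs hx))
            exact tr.isOfFinOrder ((finOrder_coe_iff y).mp h1)
          | one => rw [map_one]; exact IsOfFinOrder.one
          | mul a b _ _ iha ihb =>
            rw [map_mul]
            exact Commute.isOfFinOrder_mul (Subtype.ext (Subgroup.mem_center_iff.mp (tr b).2 (tr a))) iha ihb
          | inv a _ iha => rw [map_inv]; exact iha.inv
        have h2 : IsOfFinOrder ((tr k : Kq)) :=
          ((Subgroup.center Kq).subtype).isOfFinOrder htrk
        rw [MonoidHom.transferCenterPow_apply] at h2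
        exact h2.of_pow hidx
      -- ψ is injective, so Kq embeds into the finite L
      have hker : ψ.ker = ⊥ := by
        rw [eq_bot_iff]
        intro m hm
        have hmA : (m : Q1) ∈ A1 := (hkerA m).mp hm
        have h1 : (m : Q1) = 1 := htf1 _ hmA ((finOrder_coe_iff m).mpr (htorKq m))
        rw [Subgroup.mem_bot]
        exact Subtype.ext h1
      have hinj : Function.Injective ψ := (MonoidHom.ker_eq_bot_iff ψ).mp hker
      exact Finite.of_injective (fun k => (⟨ψ k, ⟨k, rfl⟩⟩ : ψ.range))
        (fun a b h => hinj (by simpa using congrArg Subtype.val h))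
    -- from Kq finite to K finite
    set ψ1 : K →* Q1 := π.comp K.subtype with hψ1
    have hrange1 : ψ1.range = Kq := by
      rw [hψ1, MonoidHom.range_comp, Subgroup.range_subtype, hK, MonoidHom.map_closure, hKq]
    haveI : Finite ψ1.range := by rw [hrange1]; exact hKqfin
    haveI hQfin1 : Finite (K ⧸ ψ1.ker) :=
      Finite.of_equiv _ (QuotientGroup.quotientKerEquivRange ψ1).symm.toEquiv
    haveI hFI1 : ψ1.ker.FiniteIndex := Subgroup.finiteIndex_of_finite_quotient
    haveI hKfg : Group.FG K := by
      rw [Group.fg_iff_subgroup_fg]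
      rw [Subgroup.fg_iff]
      exact ⟨xs, rfl, hxsfin⟩
    haveI hJfg : Group.FG ψ1.ker := Subgroup.fg_of_index_ne_zero _
    have hJmem : ∀ j : ψ1.ker, ((j : K) : G) ∈ T' := by
      intro j
      have h1 : ψ1 (j : K) = 1 := j.2
      have h2 : ((((j : K) : G) : Q1)) = 1 := h1
      exact (QuotientGroup.eq_one_iff _).mp h2
    haveI hJfin : Finite ψ1.ker := by
      refine finite_of_fg_torsion_comm _ hJfg ?_ ?_
      · intro j
        have h1 : IsOfFinOrder ((j : K) : G) := (hJmem j).2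
        exact (finOrder_coe_iff j).mp ((finOrder_coe_iff (j : K)).mp h1)
      · intro a b
        have h1 : ((a : K) : G) * ((b : K) : G) = ((b : K) : G) * ((a : K) : G) :=
          habel _ (hJmem a).1 _ (hJmem b).1
        exact Subtype.ext (Subtype.ext h1)
    exact Finite.of_equiv _ (Subgroup.groupEquivQuotientProdSubgroup (s := ψ1.ker)).symm

end Stmt16

/-- If G is soluble and every v-value has finite order, for a multilinear commutator
word v, then v(G) is locally finite. -/
theorem stmt_16 {G : Type*} [Group G] [Group.IsSolvable G] (v : CommTree)
    (hfin : ∀ x ∈ {x : G | ∃ f : ℕ → G, v.eval f = x}, IsOfFinOrder x) :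
    ∀ H : Subgroup G, H ≤ Subgroup.closure {x : G | ∃ f : ℕ → G, v.eval f = x} →
      H.FG → Finite H := by
  intro H hle hfg
  obtain ⟨n, hn⟩ := Group.IsSolvable.solvable (G := G)
  have hfin' : ∀ x ∈ (Stmt16.S v : Set G), IsOfFinOrder x := hfin
  have hle' : H ≤ Subgroup.closure (Stmt16.S v : Set G) := hle
  exact Stmt16.main_induction n G ‹Group G› hn v hfin' H hle' hfg
end
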